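/- For fixed t ≥ 0, the sequence n ↦ n(t − t^{1−1/n}) is nondecreasing in n and converges to t·log t as n → ∞ (with the convention 0·log 0 = 0). Consequently, for a probability density f with respect to a probability measure σ, H_{n,σ}(f) increases to ∫ f log f dσ as n → ∞. -/

import Mathlib

open MeasureTheory Filter Real

noncomputable def φn (n : ℕ) (t : ℝ) : ℝ := n * (t - t ^ (1 - 1 / (n : ℝ)))

/-- Convexity inequality for exp: for `0 < x ≤ y`,
`y * exp (-(c*x)) ≤ x * exp (-(c*y)) + y - x`. -/
lemma keyconv (c x y : ℝ) (hx : 0 < x) (hxy : x ≤ y) :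
    y * Real.exp (-(c * x)) ≤ x * Real.exp (-(c * y)) + y - x := by
  have hy : 0 < y := hx.trans_le hxy
  have hlam : 0 ≤ x / y := le_of_lt (div_pos hx hy)
  have hmu : 0 ≤ 1 - x / y := by
    have : x / y ≤ 1 := (div_le_one hy).2 hxy
    linarith
  have hsum : x / y + (1 - x / y) = 1 := by ring
  have h := convexOn_exp.2 (Set.mem_univ (-(c * y))) (Set.mem_univ (0 : ℝ)) hlam hmu hsum
  simp only [smul_eq_mul, mul_zero, add_zero, Real.exp_zero, mul_one] at h
  have harg : x / y * -(c * y) = -(c * x) := by field_simp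
  rw [harg] at h
  have := mul_le_mul_of_nonneg_left h (le_of_lt hy)
  have hy' : (y : ℝ) ≠ 0 := ne_of_gt hy
  calc y * Real.exp (-(c * x)) ≤ y * (x / y * Real.exp (-(c * y)) + (1 - x / y)) := this
    _ = x * Real.exp (-(c * y)) + y - x := by field_simp; ring

/-- Monotonicity of `n * (1 - exp (-(c/n)))` in `n ≥ 1`. -/
lemma gmono (c : ℝ) {m k : ℕ} (hm : 1 ≤ m) (hmk : m ≤ k) :
    (m : ℝ) * (1 - Real.exp (-(c / m))) ≤ (k : ℝ) * (1 - Real.exp (-(c / k))) := by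
  have hm' : (0 : ℝ) < m := by exact_mod_cast hm
  have hk' : (0 : ℝ) < k := lt_of_lt_of_le hm' (by exact_mod_cast hmk)
  have hxy : 1 / (k : ℝ) ≤ 1 / (m : ℝ) := by
    apply one_div_le_one_div_of_le hm'
    exact_mod_cast hmk
  have hx : (0 : ℝ) < 1 / (k : ℝ) := by positivity
  have h := keyconv c (1 / k) (1 / m) hx hxy
  have e1 : -(c * (1 / (k : ℝ))) = -(c / k) := by ring
  have e2 : -(c * (1 / (m : ℝ))) = -(c / m) := by ring
  rw [e1, e2] at h
  have hmul := mul_le_mul_of_nonneg_left h (le_of_lt (mul_pos hm' hk'))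
  have hm'' : (m : ℝ) ≠ 0 := ne_of_gt hm'
  have hk'' : (k : ℝ) ≠ 0 := ne_of_gt hk'
  have l1 : (m : ℝ) * k * (1 / m * Real.exp (-(c / k))) = k * Real.exp (-(c / k)) := by
    field_simp
  have l2 : (m : ℝ) * k * (1 / k * Real.exp (-(c / m)) + 1 / m - 1 / k)
      = m * Real.exp (-(c / m)) + k - m := by
    field_simp
  rw [l1, l2] at hmul
  nlinarith [hmul]

lemma phi_eq (n : ℕ) (t : ℝ) (ht : 0 < t) :
    φn n t = t * ((n : ℝ) * (1 - Real.exp (-(Real.log t / n)))) := by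
  unfold φn
  rw [Real.rpow_def_of_pos ht]
  rw [show Real.log t * (1 - 1 / (n : ℝ)) = Real.log t + -(Real.log t / n) by ring,
      Real.exp_add, Real.exp_log ht]
  ring

lemma phi_zero {n : ℕ} (hn : 2 ≤ n) : φn n 0 = 0 := by
  unfold φn
  have hn' : (2 : ℝ) ≤ (n : ℝ) := by exact_mod_cast hn
  have : 1 - 1 / (n : ℝ) ≠ 0 := by
    have h1 : 1 / (n : ℝ) ≤ 1 / 2 := by
      apply one_div_le_one_div_of_le <;> linarith
    intro h; rw [sub_eq_zero] at h; rw [← h] at h1; norm_num at h1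
  rw [Real.zero_rpow this]
  ring

lemma phi_one (t : ℝ) : φn 1 t = t - 1 := by
  unfold φn
  norm_num

lemma phi_mono (t : ℝ) (ht : 0 ≤ t) {m k : ℕ} (hm : 1 ≤ m) (hmk : m ≤ k) :
    φn m t ≤ φn k t := by
  rcases eq_or_lt_of_le ht with h0 | h0
  · -- t = 0
    rw [← h0]
    rcases eq_or_lt_of_le hm with hm1 | hm1
    · rw [← hm1, phi_one]
      rcases eq_or_lt_of_le hmk with hk1 | hk1
      · rw [← hk1, ← hm1, phi_one]
      · rw [phi_zero (by omega : 2 ≤ k)]; norm_num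
    · rw [phi_zero (by omega : 2 ≤ m), phi_zero (by omega : 2 ≤ k)]
  · rw [phi_eq m t h0, phi_eq k t h0]
    exact mul_le_mul_of_nonneg_left (gmono (Real.log t) hm hmk) ht

lemma g_tendsto (c : ℝ) :
    Tendsto (fun n : ℕ => (n : ℝ) * (1 - Real.exp (-(c / n)))) atTop (nhds c) := by
  have hf : HasDerivAt (fun x : ℝ => 1 - Real.exp (-(c * x))) c 0 := by
    have h1 : HasDerivAt (fun x : ℝ => -(c * x)) (-c) 0 := by
      have := ((hasDerivAt_id (0 : ℝ)).const_mul c).neg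
      rw [mul_one] at this
      exact this
    have h2 := h1.exp
    have h3 := h2.const_sub 1
    simpa using h3
  rw [hasDerivAt_iff_tendsto_slope] at hf
  have h2 : Tendsto (fun n : ℕ => 1 / (n : ℝ)) atTop (nhdsWithin 0 {x | x ≠ 0}) := by
    rw [tendsto_nhdsWithin_iff]
    refine ⟨tendsto_one_div_atTop_nhds_zero_nat, ?_⟩
    filter_upwards [eventually_ge_atTop 1] with n hn
    have hn' : (0 : ℝ) < n := by exact_mod_cast hn
    have : (0:ℝ) < 1 / (n:ℝ) := by positivity
    exact ne_of_gt this
  have h3 := hf.comp h2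
  apply h3.congr
  intro n
  show slope (fun x : ℝ => 1 - Real.exp (-(c * x))) 0 (1 / (n : ℝ)) = _
  rw [slope_def_field]
  simp only [mul_zero, neg_zero, Real.exp_zero, sub_self, sub_zero]
  rcases eq_or_ne (n : ℝ) 0 with h | h
  · rw [h]
    simp
  · rw [show -(c * (1 / (n : ℝ))) = -(c / n) by ring]
    field_simp

lemma phi_tendsto (t : ℝ) (ht : 0 ≤ t) :
    Tendsto (fun n : ℕ => φn n t) atTop (nhds (t * Real.log t)) := by
  rcases eq_or_lt_of_le ht with h0 | h0
  · rw [← h0]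
    simp only [Real.log_zero, mul_zero]
    apply Tendsto.congr' _ tendsto_const_nhds
    filter_upwards [eventually_ge_atTop 2] with n hn
    exact (phi_zero hn).symm
  · have := (g_tendsto (Real.log t)).const_mul t
    apply this.congr
    intro n
    exact (phi_eq n t h0).symm

lemma phi_le (t : ℝ) (ht : 0 ≤ t) {n : ℕ} (hn : 1 ≤ n) : φn n t ≤ t * Real.log t :=
  ge_of_tendsto (phi_tendsto t ht)
    ((eventually_ge_atTop n).mono fun k hk => phi_mono t ht hn hk)

theorem stmt_11 :
    (∀ t : ℝ, 0 ≤ t → ∀ m k : ℕ, 1 ≤ m → m ≤ k → φn m t ≤ φn k t) ∧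
    (∀ t : ℝ, 0 ≤ t → Tendsto (fun n : ℕ => φn n t) atTop (nhds (t * Real.log t))) ∧
    (∀ (M : Type) (_ : MeasurableSpace M) (σ : Measure M), IsProbabilityMeasure σ →
      ∀ f : M → ℝ, (∀ x, 0 ≤ f x) → Integrable f σ → (∫ x, f x ∂σ) = 1 →
      Integrable (fun x => f x * Real.log (f x)) σ →
      (∀ m k : ℕ, 1 ≤ m → m ≤ k →
        (∫ x, φn m (f x) ∂σ) ≤ ∫ x, φn k (f x) ∂σ) ∧
      Tendsto (fun n : ℕ => ∫ x, φn n (f x) ∂σ) atTop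
        (nhds (∫ x, f x * Real.log (f x) ∂σ))) := by
  refine ⟨fun t ht m k hm hmk => phi_mono t ht hm hmk,
    fun t ht => phi_tendsto t ht, ?_⟩
  intro M _ σ _ f hfpos hfint _ hint
  -- dominating function
  set g : M → ℝ := fun x => f x + 1 + |f x * Real.log (f x)| with hg_def
  have hg : Integrable g σ := (hfint.add (integrable_const 1)).add hint.abs
  have hbound : ∀ n : ℕ, ∀ x : M, |φn n (f x)| ≤ g x := by
    intro n x
    rcases Nat.eq_zero_or_pos n with h0 | h1
    · subst h0
      have : φn 0 (f x) = 0 := by unfold φn; simp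
      rw [this]
      simp only [abs_zero, hg_def]
      have := abs_nonneg (f x * Real.log (f x))
      have := hfpos x
      linarith
    · have hlow : f x - 1 ≤ φn n (f x) := by
        rw [← phi_one (f x)]
        exact phi_mono (f x) (hfpos x) le_rfl h1
      have hup := phi_le (f x) (hfpos x) h1
      rw [abs_le]
      constructor
      · have := abs_nonneg (f x * Real.log (f x))
        have := hfpos x
        simp only [hg_def]; linarith
      · have := le_abs_self (f x * Real.log (f x))
        have := hfpos x
        simp only [hg_def]; linarith
  have hfm : AEMeasurable f σ := hfint.aemeasurable
  have hmeas : ∀ n : ℕ, AEStronglyMeasurable (fun x => φn n (f x)) σ := by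
    intro n
    have hq : 0 ≤ 1 - 1 / (n : ℝ) := by
      rcases Nat.eq_zero_or_pos n with h | h
      · simp [h]
      · have hn : (1 : ℝ) ≤ n := by exact_mod_cast h
        have h2 : 1 / (n : ℝ) ≤ 1 := by
          rw [div_le_one (by linarith)]
          linarith
        linarith
    have h1 : AEMeasurable (fun x => f x ^ (1 - 1 / (n : ℝ))) σ :=
      (Real.continuous_rpow_const hq).measurable.comp_aemeasurable hfm
    exact (aemeasurable_const.mul (hfm.sub h1)).aestronglyMeasurable
  have hintn : ∀ n : ℕ, Integrable (fun x => φn n (f x)) σ := fun n =>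
    hg.mono' (hmeas n) (ae_of_all _ fun x => by
      rw [Real.norm_eq_abs]; exact hbound n x)
  refine ⟨fun m k hm hmk =>
    integral_mono (hintn m) (hintn k) fun x => phi_mono (f x) (hfpos x) hm hmk, ?_⟩
  exact tendsto_integral_of_dominated_convergence g hmeas hg
    (fun n => ae_of_all _ fun x => by rw [Real.norm_eq_abs]; exact hbound n x)
    (ae_of_all _ fun x => phi_tendsto (f x) (hfpos x))
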